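/- Let α ∈ [0,1) and define T : (Fin 3 → ℝ) → (Fin 3 → ℝ) by (T v) 0 = α·max(v 1, v 2), (T v) 1 = 1 + α·(v 1), (T v) 2 = −1 + α·(v 2), and let v⁰ : Fin 3 → ℝ be given by v⁰ 0 = 1, v⁰ 1 = 2, v⁰ 2 = −2. Then for every n ∈ ℕ: (Tⁿ v⁰) 0 = αⁿ + ∑_{k=1}^{n} α^k, (Tⁿ v⁰) 1 = αⁿ + ∑_{k=0}^{n} α^k, and (Tⁿ v⁰) 2 = −αⁿ − ∑_{k=0}^{n} α^k. -/

import Mathlib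

/-- Bellman optimality operator of the 3-state MDP of Example 1. -/
noncomputable def Tex1 (α : ℝ) (v : Fin 3 → ℝ) : Fin 3 → ℝ :=
  ![α * max (v 1) (v 2), 1 + α * v 1, -1 + α * v 2]

lemma icc_sum (α : ℝ) (n : ℕ) :
    α * ∑ k ∈ Finset.range (n + 1), α ^ k = ∑ k ∈ Finset.Icc 1 (n + 1), α ^ k := by
  rw [Finset.mul_sum, ← Finset.Ico_add_one_right_eq_Icc, Finset.sum_Ico_eq_sum_range]
  norm_num
  exact Finset.sum_congr rfl fun k _ => by ring

theorem stmt15 (α : ℝ) (hα0 : 0 ≤ α) (hα1 : α < 1) (n : ℕ) :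
    ((Tex1 α)^[n] ![(1 : ℝ), 2, -2]) 0 = α ^ n + ∑ k ∈ Finset.Icc 1 n, α ^ k ∧
    ((Tex1 α)^[n] ![(1 : ℝ), 2, -2]) 1 = α ^ n + ∑ k ∈ Finset.range (n + 1), α ^ k ∧
    ((Tex1 α)^[n] ![(1 : ℝ), 2, -2]) 2 = -α ^ n - ∑ k ∈ Finset.range (n + 1), α ^ k := by
  induction n with
  | zero => norm_num [Tex1]; rfl
  | succ n ih =>
    obtain ⟨h0, h1, h2⟩ := ih
    rw [Function.iterate_succ_apply']
    have hS : (0:ℝ) ≤ ∑ k ∈ Finset.range (n + 1), α ^ k :=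
      Finset.sum_nonneg fun k _ => pow_nonneg hα0 k
    have hpow : (0:ℝ) ≤ α ^ n := pow_nonneg hα0 n
    have hmax : max (((Tex1 α)^[n] ![(1 : ℝ), 2, -2]) 1) (((Tex1 α)^[n] ![(1 : ℝ), 2, -2]) 2)
        = α ^ n + ∑ k ∈ Finset.range (n + 1), α ^ k := by
      rw [h1, h2, max_eq_left (by linarith)]
    refine ⟨?_, ?_, ?_⟩
    · show α * _ = _
      rw [hmax, mul_add, ← icc_sum α n, pow_succ]
      ring
    · show 1 + α * _ = _
      rw [h1, show ∑ k ∈ Finset.range (n + 1 + 1), α ^ k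
        = α * ∑ k ∈ Finset.range (n + 1), α ^ k + 1 from geom_sum_succ, pow_succ]
      ring
    · show -1 + α * _ = _
      rw [h2, show ∑ k ∈ Finset.range (n + 1 + 1), α ^ k
        = α * ∑ k ∈ Finset.range (n + 1), α ^ k + 1 from geom_sum_succ, pow_succ]
      ring
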